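/- Let A be a ring such that every cotorsion A-module is Gorenstein injective. Then every injective A-module is flat-cotorsion. -/

import Mathlib

open CategoryTheory

universe u

noncomputable section

variable (A : Type u) [Ring A]

/-- `Ext^n_A(M,N)`, as a `ℤ`-module, for left modules over an arbitrary ring `A`. -/
abbrev extAb (n : ℕ) (M N : ModuleCat.{u} A) : ModuleCat.{u} ℤ :=
  ((Ext ℤ (ModuleCat.{u} A) n).obj (Opposite.op M)).obj N

/-- Vanishing of `Ext^n_A(M,N)`. -/
def ExtVanish (n : ℕ) (M N : ModuleCat.{u} A) : Prop :=
  Subsingleton (extAb A n M N)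

/-- The subgroup of `E ⊗_ℤ M` by which one divides to obtain `E ⊗_A M`,
for a right `A`-module `E` and a left `A`-module `M`. -/
def tensorRel (E : Type u) [AddCommGroup E] [Module Aᵐᵒᵖ E]
    (M : Type u) [AddCommGroup M] [Module A M] :
    Submodule ℤ (TensorProduct ℤ E M) :=
  Submodule.span ℤ {x | ∃ (e : E) (a : A) (m : M),
    x = (MulOpposite.op a • e) ⊗ₜ[ℤ] m - e ⊗ₜ[ℤ] (a • m)}

/-- The tensor product `E ⊗_A M` of a right `A`-module `E` and a left `A`-module `M`. -/
abbrev RTensor (E : Type u) [AddCommGroup E] [Module Aᵐᵒᵖ E]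
    (M : Type u) [AddCommGroup M] [Module A M] : Type u :=
  TensorProduct ℤ E M ⧸ tensorRel A E M

/-- Functoriality of `E ⊗_A -` in the left-module variable. -/
def RTensor.map (E : Type u) [AddCommGroup E] [Module Aᵐᵒᵖ E]
    {M N : Type u} [AddCommGroup M] [Module A M] [AddCommGroup N] [Module A N]
    (f : M →ₗ[A] N) : RTensor A E M →ₗ[ℤ] RTensor A E N :=
  Submodule.mapQ _ _ (LinearMap.lTensor E f.toAddMonoidHom.toIntLinearMap) (by
    simp only [tensorRel]
    rw [Submodule.span_le]
    rintro x ⟨e, a, m, rfl⟩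
    refine Submodule.mem_comap.2 ?_
    erw [map_sub, LinearMap.lTensor_tmul, LinearMap.lTensor_tmul]
    refine Submodule.subset_span ⟨e, a, f m, ?_⟩
    simp [LinearMap.map_smul])

/-- Functoriality of `- ⊗_A M` in the right-module variable. -/
def RTensor.mapRight {E E' : Type u} [AddCommGroup E] [Module Aᵐᵒᵖ E]
    [AddCommGroup E'] [Module Aᵐᵒᵖ E']
    (M : Type u) [AddCommGroup M] [Module A M]
    (g : E →ₗ[Aᵐᵒᵖ] E') : RTensor A E M →ₗ[ℤ] RTensor A E' M :=
  Submodule.mapQ _ _ (LinearMap.rTensor M g.toAddMonoidHom.toIntLinearMap) (by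
    simp only [tensorRel]
    rw [Submodule.span_le]
    rintro x ⟨e, a, m, rfl⟩
    refine Submodule.mem_comap.2 ?_
    erw [map_sub, LinearMap.rTensor_tmul, LinearMap.rTensor_tmul]
    refine Submodule.subset_span ⟨g e, a, m, ?_⟩
    simp [LinearMap.map_smul])

/-- A left `A`-module `M` is flat if `- ⊗_A M` preserves injectivity of maps of
right `A`-modules. -/
def IsFlat (M : Type u) [AddCommGroup M] [Module A M] : Prop :=
  ∀ (E E' : Type u) [AddCommGroup E] [Module Aᵐᵒᵖ E] [AddCommGroup E'] [Module Aᵐᵒᵖ E']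
    (g : E →ₗ[Aᵐᵒᵖ] E'), Function.Injective g →
      Function.Injective (RTensor.mapRight A M g)

/-- A right `A`-module `E` is flat if `E ⊗_A -` preserves injectivity of maps of
left `A`-modules. -/
def IsFlatRight (E : Type u) [AddCommGroup E] [Module Aᵐᵒᵖ E] : Prop :=
  ∀ (M N : Type u) [AddCommGroup M] [Module A M] [AddCommGroup N] [Module A N]
    (f : M →ₗ[A] N), Function.Injective f →
      Function.Injective (RTensor.map A E f)

/-- An `A`-module `C` is cotorsion if `Ext^1_A(F,C) = 0` for every flat `F`. -/
def Cotorsion (M : ModuleCat.{u} A) : Prop :=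
  ∀ F : ModuleCat.{u} A, IsFlat A F → ExtVanish A 1 F M

/-- Flat dimension at most `n`. -/
def FlatDimLE : ℕ → ModuleCat.{u} A → Prop
  | 0, M => IsFlat A M
  | n + 1, M => ∃ (F : ModuleCat.{u} A) (π : F ⟶ M), IsFlat A F ∧
      Function.Surjective π ∧
      FlatDimLE n (ModuleCat.of A (LinearMap.ker (π.hom : F →ₗ[A] M)))

/-- Finite flat dimension. -/
def FiniteFlatDim (M : ModuleCat.{u} A) : Prop := ∃ n, FlatDimLE A n M

/-- An `A`-module `M` is strongly cotorsion if `Ext^1_A(L,M) = 0` for every `L` of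
finite flat dimension. -/
def StronglyCotorsion (M : ModuleCat.{u} A) : Prop :=
  ∀ L : ModuleCat.{u} A, FiniteFlatDim A L → ExtVanish A 1 L M

/-- Projective dimension at most `n`. -/
def ProjDimLE : ℕ → ModuleCat.{u} A → Prop
  | 0, M => Module.Projective A M
  | n + 1, M => ∃ (F : ModuleCat.{u} A) (π : F ⟶ M), Module.Projective A F ∧
      Function.Surjective π ∧
      ProjDimLE n (ModuleCat.of A (LinearMap.ker (π.hom : F →ₗ[A] M)))

/-- A `ℤ`-indexed complex of `A`-modules (differential of degree `-1`). -/
structure ModComplex where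
  X : ℤ → ModuleCat.{u} A
  d : ∀ i : ℤ, X (i + 1) ⟶ X i
  dd : ∀ i : ℤ, d (i + 1) ≫ d i = 0

/-- Acyclicity (exactness at every degree) of a complex. -/
def ModComplex.Acyclic (C : ModComplex A) : Prop :=
  ∀ i : ℤ, LinearMap.range ((C.d (i + 1)).hom : C.X (i + 1 + 1) →ₗ[A] C.X (i + 1)) =
    LinearMap.ker ((C.d i).hom : C.X (i + 1) →ₗ[A] C.X i)

/-- `G` is Gorenstein injective: a cycle of a totally acyclic complex of injectives. -/
def GorensteinInjective (G : ModuleCat.{u} A) : Prop :=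
  ∃ C : ModComplex A,
    (∀ i, Module.Injective A (C.X i)) ∧ C.Acyclic ∧
    (∀ E : ModuleCat.{u} A, Module.Injective A E →
      ∀ (i : ℤ) (f : E ⟶ C.X (i + 1)), f ≫ C.d i = 0 →
        ∃ g : E ⟶ C.X (i + 1 + 1), g ≫ C.d (i + 1) = f) ∧
    Nonempty (G ≃ₗ[A] LinearMap.ker ((C.d (-1)).hom : C.X (-1 + 1) →ₗ[A] C.X (-1)))

/-- `G` is Gorenstein projective: a cycle of a totally acyclic complex of projectives. -/
def GorensteinProjective (G : ModuleCat.{u} A) : Prop :=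
  ∃ C : ModComplex A,
    (∀ i, Module.Projective A (C.X i)) ∧ C.Acyclic ∧
    (∀ Q : ModuleCat.{u} A, Module.Projective A Q →
      ∀ (i : ℤ) (f : C.X (i + 1) ⟶ Q), C.d (i + 1) ≫ f = 0 →
        ∃ g : C.X i ⟶ Q, C.d i ≫ g = f) ∧
    Nonempty (G ≃ₗ[A] LinearMap.ker ((C.d (-1)).hom : C.X (-1 + 1) →ₗ[A] C.X (-1)))

/-- `G` is Gorenstein flat: a cycle of an acyclic complex of flats which stays acyclic
after applying `E ⊗_A -` for every injective right `A`-module `E`. -/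
def GorensteinFlat (G : ModuleCat.{u} A) : Prop :=
  ∃ C : ModComplex A,
    (∀ i, IsFlat A (C.X i)) ∧ C.Acyclic ∧
    (∀ (E : Type u) [AddCommGroup E] [Module Aᵐᵒᵖ E], Module.Injective Aᵐᵒᵖ E →
      ∀ i : ℤ,
        LinearMap.range (RTensor.map A E ((C.d (i + 1)).hom : C.X (i + 1 + 1) →ₗ[A] C.X (i + 1))) =
        LinearMap.ker (RTensor.map A E ((C.d i).hom : C.X (i + 1) →ₗ[A] C.X i))) ∧
    Nonempty (G ≃ₗ[A] LinearMap.ker ((C.d (-1)).hom : C.X (-1 + 1) →ₗ[A] C.X (-1)))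

/-- Flat-cotorsion module. -/
def FlatCotorsion (M : ModuleCat.{u} A) : Prop := IsFlat A M ∧ Cotorsion A M

/-- `G` is Gorenstein flat-cotorsion: a cokernel of a totally acyclic complex of
flat-cotorsion modules. -/
def GorensteinFlatCotorsion (G : ModuleCat.{u} A) : Prop :=
  ∃ C : ModComplex A,
    (∀ i, FlatCotorsion A (C.X i)) ∧ C.Acyclic ∧
    (∀ W : ModuleCat.{u} A, FlatCotorsion A W →
      ∀ (i : ℤ) (f : C.X (i + 1) ⟶ W), C.d (i + 1) ≫ f = 0 →
        ∃ g : C.X i ⟶ W, C.d i ≫ g = f) ∧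
    Nonempty (G ≃ₗ[A]
      (C.X 0 ⧸ LinearMap.range ((C.d 0).hom : C.X (0 + 1) →ₗ[A] C.X 0)))

/-- Gorenstein injective dimension at most `n`: `M` has an injective coresolution whose
`n`-th cosyzygy is Gorenstein injective. -/
def GidLE : ℕ → ModuleCat.{u} A → Prop
  | 0, M => GorensteinInjective A M
  | n + 1, M => ∃ (I : ModuleCat.{u} A) (ι : M ⟶ I), Module.Injective A I ∧
      Function.Injective ι ∧
      GidLE n (ModuleCat.of A (I ⧸ LinearMap.range (ι.hom : M →ₗ[A] I)))

/-- Injective dimension at most `n`. -/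
def InjDimLE : ℕ → ModuleCat.{u} A → Prop
  | 0, M => Module.Injective A M
  | n + 1, M => ∃ (I : ModuleCat.{u} A) (ι : M ⟶ I), Module.Injective A I ∧
      Function.Injective ι ∧
      InjDimLE n (ModuleCat.of A (I ⧸ LinearMap.range (ι.hom : M →ₗ[A] I)))

/-- Gorenstein flat dimension at most `n`. -/
def GfdLE : ℕ → ModuleCat.{u} A → Prop
  | 0, M => GorensteinFlat A M
  | n + 1, M => ∃ (F : ModuleCat.{u} A) (π : F ⟶ M), IsFlat A F ∧
      Function.Surjective π ∧
      GfdLE n (ModuleCat.of A (LinearMap.ker (π.hom : F →ₗ[A] M)))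

/-- The Gorenstein injective dimension, as an extended natural number. -/
def gid (M : ModuleCat.{u} A) : ℕ∞ := sInf {n : ℕ∞ | ∃ k : ℕ, n = k ∧ GidLE A k M}

/-- The injective dimension, as an extended natural number. -/
def injDim (M : ModuleCat.{u} A) : ℕ∞ := sInf {n : ℕ∞ | ∃ k : ℕ, n = k ∧ InjDimLE A k M}

/-- The projective dimension, as an extended natural number. -/
def projDim (M : ModuleCat.{u} A) : ℕ∞ := sInf {n : ℕ∞ | ∃ k : ℕ, n = k ∧ ProjDimLE A k M}

/-- The finitistic projective dimension of `A`. -/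
def FPD : ℕ∞ := sSup {d : ℕ∞ | ∃ M : ModuleCat.{u} A, d = projDim A M ∧ d ≠ ⊤}

/-- `D` is an `n`-th cosyzygy of `N` with respect to an injective coresolution:
there is an exact sequence `0 → N → E_0 → ⋯ → E_{n-1} → D → 0` with the `E_i` injective. -/
def CosyzygyOf : ℕ → ModuleCat.{u} A → ModuleCat.{u} A → Prop
  | 0, N, D => Nonempty (N ≃ₗ[A] D)
  | n + 1, N, D => ∃ (E : ModuleCat.{u} A) (ι : N ⟶ E), Module.Injective A E ∧
      Function.Injective ι ∧
      CosyzygyOf n (ModuleCat.of A (E ⧸ LinearMap.range (ι.hom : N →ₗ[A] E))) D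

/-- `M` is an `n`-th syzygy of `N` with respect to a resolution by flat modules:
there is an exact sequence `0 → M → F_{n-1} → ⋯ → F_0 → N → 0` with the `F_i` flat. -/
def SyzygyOf : ℕ → ModuleCat.{u} A → ModuleCat.{u} A → Prop
  | 0, M, N => Nonempty (M ≃ₗ[A] N)
  | n + 1, M, N => ∃ (F : ModuleCat.{u} A) (ι : M ⟶ F), IsFlat A F ∧
      Function.Injective ι ∧
      SyzygyOf n (ModuleCat.of A (F ⧸ LinearMap.range (ι.hom : M →ₗ[A] F))) N

end


section RTbasic

open MulOpposite

variable {A : Type u} [Ring A]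
variable {E E' E'' : Type u} [AddCommGroup E] [Module Aᵐᵒᵖ E] [AddCommGroup E'] [Module Aᵐᵒᵖ E']
  [AddCommGroup E''] [Module Aᵐᵒᵖ E'']
variable {M N L : Type u} [AddCommGroup M] [Module A M] [AddCommGroup N] [Module A N]
  [AddCommGroup L] [Module A L]

namespace RT

/-- basic generator of `RTensor`. -/
noncomputable def mk (A : Type u) [Ring A] {E M : Type u} [AddCommGroup E] [Module Aᵐᵒᵖ E]
    [AddCommGroup M] [Module A M] (e : E) (m : M) : RTensor A E M :=
  Submodule.Quotient.mk (e ⊗ₜ[ℤ] m)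

lemma mk_add_left (e e' : E) (m : M) : mk A (e + e') m = mk A e m + mk A e' m := by
  simp only [mk, ← Submodule.Quotient.mk_add, TensorProduct.add_tmul]

lemma mk_add_right (e : E) (m m' : M) : mk A e (m + m') = mk A e m + mk A e m' := by
  simp only [mk, ← Submodule.Quotient.mk_add, TensorProduct.tmul_add]

@[simp] lemma mk_zero_left (m : M) : mk A (0 : E) m = 0 := by
  simp [mk, TensorProduct.zero_tmul, Submodule.Quotient.mk_eq_zero]

@[simp] lemma mk_zero_right (e : E) : mk A e (0 : M) = 0 := by
  simp [mk, TensorProduct.tmul_zero, Submodule.Quotient.mk_eq_zero]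

lemma mk_op_smul (e : E) (a : A) (m : M) : mk A (op a • e) m = mk A e (a • m) := by
  rw [mk, mk, ← sub_eq_zero, ← Submodule.Quotient.mk_sub, Submodule.Quotient.mk_eq_zero]
  exact Submodule.subset_span ⟨e, a, m, rfl⟩

lemma induction_on {P : RTensor A E M → Prop} (x : RTensor A E M)
    (zero : P 0) (hmk : ∀ e m, P (mk A e m)) (hadd : ∀ x y, P x → P y → P (x + y)) : P x := by
  obtain ⟨y, rfl⟩ := Submodule.Quotient.mk_surjective _ x
  induction y using TensorProduct.induction_on with
  | zero => simpa using zero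
  | tmul e m => exact hmk e m
  | add a b ha hb => rw [Submodule.Quotient.mk_add]; exact hadd _ _ ha hb

/-- lift a balanced biadditive map to `RTensor`. -/
noncomputable def lift {D : Type*} [AddCommGroup D] (f : E →+ M →+ D)
    (hf : ∀ (a : A) (e : E) (m : M), f (op a • e) m = f e (a • m)) :
    RTensor A E M →ₗ[ℤ] D := by
  refine Submodule.liftQ _ (TensorProduct.liftAddHom f
    (fun z e m => by
      simp [map_zsmul])).toIntLinearMap ?_
  rw [tensorRel, Submodule.span_le]
  rintro x ⟨e, a, m, rfl⟩
  simp only [SetLike.mem_coe, LinearMap.mem_ker, map_sub, AddMonoidHom.coe_toIntLinearMap,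
    TensorProduct.liftAddHom_tmul, hf, sub_self]

@[simp] lemma lift_mk {D : Type*} [AddCommGroup D] (f : E →+ M →+ D) (hf) (e : E) (m : M) :
    lift f hf (mk A e m) = f e m := by
  simp [lift, mk, Submodule.liftQ_apply, TensorProduct.liftAddHom_tmul]

@[simp] lemma map_mk (f : M →ₗ[A] N) (e : E) (m : M) :
    RTensor.map A E f (mk A e m) = mk A e (f m) := by
  rfl

@[simp] lemma mapRight_mk (g : E →ₗ[Aᵐᵒᵖ] E') (e : E) (m : M) :
    RTensor.mapRight A M g (mk A e m) = mk A (g e) m := by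
  rfl

lemma map_comp_apply (f : M →ₗ[A] N) (f' : N →ₗ[A] L) (x : RTensor A E M) :
    RTensor.map A E (f' ∘ₗ f) x = RTensor.map A E f' (RTensor.map A E f x) := by
  induction x using induction_on with
  | zero => simp
  | hmk e m => simp
  | hadd a b ha hb => simp only [map_add, ha, hb]

lemma mapRight_comp_apply (g : E →ₗ[Aᵐᵒᵖ] E') (g' : E' →ₗ[Aᵐᵒᵖ] E'') (x : RTensor A E M) :
    RTensor.mapRight A M (g' ∘ₗ g) x = RTensor.mapRight A M g' (RTensor.mapRight A M g x) := by
  induction x using induction_on with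
  | zero => simp
  | hmk e m => simp
  | hadd a b ha hb => simp only [map_add, ha, hb]

lemma map_mapRight_comm (f : M →ₗ[A] N) (g : E →ₗ[Aᵐᵒᵖ] E') (x : RTensor A E M) :
    RTensor.map A E' f (RTensor.mapRight A M g x)
      = RTensor.mapRight A N g (RTensor.map A E f x) := by
  induction x using induction_on with
  | zero => simp
  | hmk e m => simp
  | hadd a b ha hb => simp only [map_add, ha, hb]

lemma map_zero_map (x : RTensor A E M) : RTensor.map A E (0 : M →ₗ[A] N) x = 0 := by
  induction x using induction_on with
  | zero => simp
  | hmk e m => simp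
  | hadd a b ha hb => simp only [map_add, ha, hb, add_zero]

lemma mapRight_zero_map (x : RTensor A E M) :
    RTensor.mapRight A M (0 : E →ₗ[Aᵐᵒᵖ] E') x = 0 := by
  induction x using induction_on with
  | zero => simp
  | hmk e m => simp
  | hadd a b ha hb => simp only [map_add, ha, hb, add_zero]

lemma mapRight_surjective (g : E →ₗ[Aᵐᵒᵖ] E') (hg : Function.Surjective g) :
    Function.Surjective (RTensor.mapRight A M g) := by
  intro x
  induction x using induction_on with
  | zero => exact ⟨0, map_zero _⟩
  | hmk e' m => obtain ⟨e, rfl⟩ := hg e'; exact ⟨mk A e m, by simp⟩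
  | hadd a b ha hb =>
      obtain ⟨a', ha'⟩ := ha; obtain ⟨b', hb'⟩ := hb
      exact ⟨a' + b', by rw [map_add, ha', hb']⟩

end RT
end RTbasic


section RTexact

open MulOpposite

variable {A : Type u} [Ring A]
variable {E E' E'' : Type u} [AddCommGroup E] [Module Aᵐᵒᵖ E] [AddCommGroup E'] [Module Aᵐᵒᵖ E']
  [AddCommGroup E''] [Module Aᵐᵒᵖ E'']
variable {M N L : Type u} [AddCommGroup M] [Module A M] [AddCommGroup N] [Module A N]
  [AddCommGroup L] [Module A L]

namespace RT

lemma mk_sub_right (e : E) (m m' : M) : mk A e (m - m') = mk A e m - mk A e m' := by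
  rw [eq_sub_iff_add_eq, ← mk_add_right, sub_add_cancel]

lemma mk_sub_left (e e' : E) (m : M) : mk A (e - e') m = mk A e m - mk A e' m := by
  rw [eq_sub_iff_add_eq, ← mk_add_left, sub_add_cancel]

lemma exact_left (f₁ : M →ₗ[A] N) (f₂ : N →ₗ[A] L)
    (hsurj : Function.Surjective f₂)
    (hex : ∀ n, f₂ n = 0 → ∃ m, f₁ m = n) :
    ∀ y : RTensor A E N, RTensor.map A E f₂ y = 0 →
      ∃ w : RTensor A E M, RTensor.map A E f₁ w = y := by
  classical
  let π2 : RTensor A E N →ₗ[ℤ] _ := (LinearMap.range (RTensor.map A E f₁)).mkQ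
  have wd : ∀ (e : E) (n n' : N), f₂ n = f₂ n' → π2 (mk A e n) = π2 (mk A e n') := by
    intro e n n' hnn
    rw [← sub_eq_zero, ← map_sub, ← mk_sub_right]
    obtain ⟨m, hm⟩ := hex (n - n') (by rw [map_sub, hnn, sub_self])
    rw [← hm, Submodule.mkQ_apply, Submodule.Quotient.mk_eq_zero]
    exact ⟨mk A e m, by simp⟩
  let sec : L → N := Function.surjInv hsurj
  have hsec : ∀ l, f₂ (sec l) = l := Function.surjInv_eq hsurj
  let φ : E →+ L →+ _ := AddMonoidHom.mk' (fun e => AddMonoidHom.mk'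
      (fun l => π2 (mk A e (sec l))) (by
        intro l l'
        show π2 (mk A e (sec (l + l'))) = π2 (mk A e (sec l)) + π2 (mk A e (sec l'))
        rw [wd e (sec (l + l')) (sec l + sec l') (by rw [map_add, hsec, hsec, hsec]),
          mk_add_right, map_add]))
      (by
        intro e e'
        apply AddMonoidHom.ext; intro l
        show π2 (mk A (e + e') (sec l)) = π2 (mk A e (sec l)) + π2 (mk A e' (sec l))
        rw [mk_add_left, map_add])
  have bal : ∀ (a : A) (e : E) (l : L), φ (op a • e) l = φ e (a • l) := by
    intro a e l
    show π2 (mk A (op a • e) (sec l)) = π2 (mk A e (sec (a • l)))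
    rw [mk_op_smul]
    exact wd e _ _ (by rw [map_smul, hsec, hsec])
  have key : ∀ y : RTensor A E N, lift φ bal (RTensor.map A E f₂ y) = π2 y := by
    intro y
    induction y using induction_on with
    | zero => simp
    | hmk e n =>
        rw [map_mk, lift_mk]
        exact wd e (sec (f₂ n)) n (by rw [hsec])
    | hadd a b ha hb => rw [map_add, map_add, ha, hb, map_add]
  intro y hy
  have h0 : π2 y = 0 := by rw [← key, hy, map_zero]
  rwa [Submodule.mkQ_apply, Submodule.Quotient.mk_eq_zero, LinearMap.mem_range] at h0

lemma exact_right (g₁ : E →ₗ[Aᵐᵒᵖ] E') (g₂ : E' →ₗ[Aᵐᵒᵖ] E'')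
    (hsurj : Function.Surjective g₂)
    (hex : ∀ e', g₂ e' = 0 → ∃ e, g₁ e = e') :
    ∀ y : RTensor A E' M, RTensor.mapRight A M g₂ y = 0 →
      ∃ w : RTensor A E M, RTensor.mapRight A M g₁ w = y := by
  classical
  let π2 : RTensor A E' M →ₗ[ℤ] _ := (LinearMap.range (RTensor.mapRight A M g₁)).mkQ
  have wd : ∀ (e e' : E') (m : M), g₂ e = g₂ e' → π2 (mk A e m) = π2 (mk A e' m) := by
    intro e e' m hee
    rw [← sub_eq_zero, ← map_sub, ← mk_sub_left]
    obtain ⟨d, hd⟩ := hex (e - e') (by rw [map_sub, hee, sub_self])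
    rw [← hd, Submodule.mkQ_apply, Submodule.Quotient.mk_eq_zero]
    exact ⟨mk A d m, by simp⟩
  let sec : E'' → E' := Function.surjInv hsurj
  have hsec : ∀ l, g₂ (sec l) = l := Function.surjInv_eq hsurj
  let φ : E'' →+ M →+ _ := AddMonoidHom.mk' (fun l => AddMonoidHom.mk'
      (fun m => π2 (mk A (sec l) m)) (by
        intro m m'
        show π2 (mk A (sec l) (m + m')) = π2 (mk A (sec l) m) + π2 (mk A (sec l) m')
        rw [mk_add_right, map_add]))
      (by
        intro l l'
        apply AddMonoidHom.ext; intro m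
        show π2 (mk A (sec (l + l')) m) = π2 (mk A (sec l) m) + π2 (mk A (sec l') m)
        rw [wd (sec (l + l')) (sec l + sec l') m (by rw [map_add, hsec, hsec, hsec]),
          mk_add_left, map_add])
  have bal : ∀ (a : A) (l : E'') (m : M), φ (op a • l) m = φ l (a • m) := by
    intro a l m
    show π2 (mk A (sec (op a • l)) m) = π2 (mk A (sec l) (a • m))
    rw [← mk_op_smul]
    exact wd _ _ _ (by rw [map_smul, hsec, hsec])
  have key : ∀ y : RTensor A E' M, lift φ bal (RTensor.mapRight A M g₂ y) = π2 y := by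
    intro y
    induction y using induction_on with
    | zero => simp
    | hmk e m =>
        rw [mapRight_mk, lift_mk]
        exact wd (sec (g₂ e)) e m (by rw [hsec])
    | hadd a b ha hb => rw [map_add, map_add, ha, hb, map_add]
  intro y hy
  have h0 : π2 y = 0 := by rw [← key, hy, map_zero]
  rwa [Submodule.mkQ_apply, Submodule.Quotient.mk_eq_zero, LinearMap.mem_range] at h0

section free

variable (α : Type u)

/-- `(α →₀ Aᵐᵒᵖ) ⊗_A M → (α →₀ M)`. -/
noncomputable def toFinsupp : RTensor A (α →₀ Aᵐᵒᵖ) M →ₗ[ℤ] (α →₀ M) :=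
  lift (AddMonoidHom.mk' (fun l => AddMonoidHom.mk'
      (fun m => l.mapRange (fun c => c.unop • m) (by simp))
      (fun m m' => by
        ext a; simp [Finsupp.mapRange_apply, smul_add, add_smul]))
    (fun l l' => by
        apply AddMonoidHom.ext; intro m
        ext a; simp [Finsupp.mapRange_apply, add_smul]))
    (fun a l m => by
        show (op a • l).mapRange (fun c => c.unop • m) (by simp)
            = l.mapRange (fun c => c.unop • (a • m)) (by simp)
        ext x
        simp [Finsupp.mapRange_apply, Finsupp.smul_apply, smul_eq_mul, unop_mul, mul_smul])

@[simp] lemma toFinsupp_mk (l : α →₀ Aᵐᵒᵖ) (m : M) :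
    toFinsupp α (mk A l m) = l.mapRange (fun c => c.unop • m) (by simp) :=
  lift_mk _ _ _ _

/-- `(α →₀ M) → (α →₀ Aᵐᵒᵖ) ⊗_A M`. -/
noncomputable def fromFinsupp : (α →₀ M) →+ RTensor A (α →₀ Aᵐᵒᵖ) M :=
  Finsupp.liftAddHom (fun a => AddMonoidHom.mk'
    (fun m => mk A (Finsupp.single a (1 : Aᵐᵒᵖ)) m) (fun m m' => mk_add_right _ _ _))

lemma fromFinsupp_toFinsupp (t : RTensor A (α →₀ Aᵐᵒᵖ) M) :
    fromFinsupp α (toFinsupp α t) = t := by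
  induction t using induction_on with
  | zero => simp
  | hadd a b ha hb => rw [map_add, map_add, ha, hb]
  | hmk l m =>
      rw [toFinsupp_mk]
      rw [fromFinsupp, Finsupp.liftAddHom_apply]
      rw [Finsupp.sum_mapRange_index (by simp)]
      have step : ∀ (a : α) (c : Aᵐᵒᵖ),
          mk A (Finsupp.single a (1 : Aᵐᵒᵖ)) (c.unop • m) = mk A (Finsupp.single a c) m := by
        intro a c
        rw [← mk_op_smul, op_unop, Finsupp.smul_single, smul_eq_mul, mul_one]
      show (l.sum fun a c =>
          AddMonoidHom.mk' (fun m => mk A (Finsupp.single a (1 : Aᵐᵒᵖ)) m)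
            (fun m m' => mk_add_right _ _ _) (c.unop • m)) = mk A l m
      simp only [AddMonoidHom.mk'_apply, step]
      let mkL : (α →₀ Aᵐᵒᵖ) →+ RTensor A (α →₀ Aᵐᵒᵖ) M :=
        AddMonoidHom.mk' (fun l' => mk A l' m) (fun a b => mk_add_left _ _ _)
      have : (l.sum fun a c => mk A (Finsupp.single a c) m)
          = mkL (l.sum fun a c => Finsupp.single a c) := (map_finsuppSum mkL l _).symm
      rw [this, Finsupp.sum_single]
      rfl

lemma toFinsupp_injective : Function.Injective (toFinsupp (A:=A) (M:=M) α) :=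
  Function.LeftInverse.injective (fromFinsupp_toFinsupp α)

lemma map_free_injective (f : M →ₗ[A] N) (hf : Function.Injective f) :
    Function.Injective (RTensor.map A (α →₀ Aᵐᵒᵖ) f) := by
  have nat : ∀ t, toFinsupp α (RTensor.map A (α →₀ Aᵐᵒᵖ) f t)
      = (toFinsupp α t).mapRange f (map_zero f) := by
    intro t
    induction t using induction_on with
    | zero => simp
    | hadd a b ha hb => rw [map_add, map_add, ha, hb, map_add, Finsupp.mapRange_add (map_add f)]
    | hmk l m =>
        rw [map_mk, toFinsupp_mk, toFinsupp_mk]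
        ext a
        simp [Finsupp.mapRange_apply]
  intro t t' h
  apply toFinsupp_injective α
  apply Finsupp.mapRange_injective f (map_zero f) hf
  rw [← nat, ← nat, h]

end free

/-- A short exact sequence with flat cokernel stays exact (in particular injective on the left)
after tensoring. -/
lemma pure_ker {F X : Type u} [AddCommGroup F] [Module A F] [AddCommGroup X] [Module A X]
    (hF : IsFlat A F) (q : X →ₗ[A] F) (hq : Function.Surjective q)
    (M : Type u) [AddCommGroup M] [Module Aᵐᵒᵖ M] :
    Function.Injective (RTensor.map A M (LinearMap.ker q).subtype) := by
  classical
  set K := LinearMap.ker q with hK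
  suffices hk : ∀ x : RTensor A M K, RTensor.map A M K.subtype x = 0 → x = 0 by
    intro x y hxy
    rw [← sub_eq_zero]
    exact hk _ (by rw [map_sub, hxy, sub_self])
  intro x hx
  let P := M →₀ Aᵐᵒᵖ
  let pr : P →ₗ[Aᵐᵒᵖ] M := Finsupp.linearCombination Aᵐᵒᵖ (id : M → M)
  have hpr : Function.Surjective pr := fun m =>
    ⟨Finsupp.single m 1, by rw [show pr (Finsupp.single m 1) = _ from Finsupp.linearCombination_single Aᵐᵒᵖ _ _, one_smul, id_eq]⟩
  let i : ↥(LinearMap.ker pr) →ₗ[Aᵐᵒᵖ] P := (LinearMap.ker pr).subtype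
  obtain ⟨y, hy⟩ := mapRight_surjective (M := K) pr hpr x
  set y' := RTensor.map A P K.subtype y with hy'
  have h2 : RTensor.mapRight A X pr y' = 0 := by
    rw [hy', ← map_mapRight_comm, hy]
    exact hx
  obtain ⟨z, hz⟩ := exact_right (M := X) i pr hpr (fun p hp => Exists.intro (⟨p, hp⟩ : ↥(LinearMap.ker pr)) rfl) y' h2
  have hqs : q ∘ₗ K.subtype = 0 := LinearMap.ext fun k => k.2
  have h4 : RTensor.mapRight A F i (RTensor.map A (LinearMap.ker pr) q z) = 0 := by
    rw [← map_mapRight_comm, hz, hy', ← map_comp_apply, hqs, map_zero_map]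
  have h5 : RTensor.map A (LinearMap.ker pr) q z = 0 :=
    hF _ _ i (Submodule.injective_subtype _) (by rw [h4, map_zero])
  obtain ⟨w, hw⟩ := exact_left (E := ↥(LinearMap.ker pr)) K.subtype q hq (fun n hn => Exists.intro (⟨n, hn⟩ : ↥K) rfl) z h5
  have h6 : RTensor.map A P K.subtype (RTensor.mapRight A K i w) = y' := by
    rw [map_mapRight_comm, hw, hz]
  have h7 : RTensor.mapRight A K i w = y :=
    map_free_injective M K.subtype (Submodule.injective_subtype K) (h6.trans hy')
  have hpri : pr ∘ₗ i = 0 := LinearMap.ext fun r => r.2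
  rw [← hy, ← h7, ← mapRight_comp_apply, hpri, mapRight_zero_map]

end RT
end RTexact


section Char

open MulOpposite

variable {A : Type u} [Ring A]

section instances
variable (E : Type u) [AddCommGroup E] [Module Aᵐᵒᵖ E]

/-- left scalar action on characters of a right module. -/
noncomputable instance charSMul : SMul A (CharacterModule E) :=
  ⟨fun a χ => χ.comp (AddMonoidHom.mk' (fun e => op a • e) (fun x y => smul_add _ x y))⟩

variable {E}

@[simp] lemma char_smul_apply (a : A) (χ : CharacterModule E) (e : E) :
    (a • χ) e = χ (op a • e) := rfl

/-- characters of a right module form a left module. -/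
noncomputable instance charModule : Module A (CharacterModule E) where
  one_smul χ := by ext e; rw [char_smul_apply, MulOpposite.op_one, one_smul]
  mul_smul a b χ := by
    ext e; rw [char_smul_apply, char_smul_apply, char_smul_apply, MulOpposite.op_mul, mul_smul]
  smul_zero a := by ext e; rfl
  smul_add a χ ψ := by ext e; rfl
  add_smul a b χ := by
    ext e
    show χ (op (a + b) • e) = χ (op a • e) + χ (op b • e)
    rw [MulOpposite.op_add, add_smul, map_add]
  zero_smul χ := by
    ext e
    show χ (op (0 : A) • e) = 0
    rw [MulOpposite.op_zero, zero_smul, map_zero]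

end instances

variable {E E' : Type u} [AddCommGroup E] [Module Aᵐᵒᵖ E] [AddCommGroup E'] [Module Aᵐᵒᵖ E']
variable {I : Type u} [AddCommGroup I] [Module A I]

/-- a character of `E ⊗_A I` gives an `A`-map `I → E⋆`. -/
noncomputable def toChar (χ : CharacterModule (RTensor A E I)) : I →ₗ[A] CharacterModule E where
  toFun m := AddMonoidHom.mk' (fun e => χ (RT.mk A e m))
    (fun e e' => by
      show χ (RT.mk A (e + e') m) = χ (RT.mk A e m) + χ (RT.mk A e' m)
      rw [RT.mk_add_left, map_add])
  map_add' m m' := by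
    ext e
    show χ (RT.mk A e (m + m')) = χ (RT.mk A e m) + χ (RT.mk A e m')
    rw [RT.mk_add_right, map_add]
  map_smul' a m := by
    ext e
    show χ (RT.mk A e (a • m)) = χ (RT.mk A (op a • e) m)
    rw [RT.mk_op_smul]

@[simp] lemma toChar_apply (χ : CharacterModule (RTensor A E I)) (m : I) (e : E) :
    toChar χ m e = χ (RT.mk A e m) := rfl

/-- bilinear form of an `A`-map `I → E⋆`. -/
noncomputable def ofCharBil (ψ : I →ₗ[A] CharacterModule E) : E →+ I →+ AddCircle (1 : ℚ) :=
  AddMonoidHom.mk'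
    (fun e => AddMonoidHom.mk' (fun m => ψ m e)
      (fun m m' => by
        show ψ (m + m') e = ψ m e + ψ m' e
        rw [map_add]; rfl))
    (fun e e' => by
      apply AddMonoidHom.ext; intro m
      show ψ m (e + e') = ψ m e + ψ m e'
      rw [map_add])

lemma ofCharBil_bal (ψ : I →ₗ[A] CharacterModule E) :
    ∀ (a : A) (e : E) (m : I), ofCharBil ψ (op a • e) m = ofCharBil ψ e (a • m) := by
  intro a e m
  show ψ m (op a • e) = ψ (a • m) e
  rw [LinearMap.map_smul ψ a m]; rfl

/-- an `A`-map `I → E⋆` gives a character of `E ⊗_A I`. -/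
noncomputable def ofChar (ψ : I →ₗ[A] CharacterModule E) : CharacterModule (RTensor A E I) :=
  AddMonoidHom.mk' (fun x => RT.lift (ofCharBil ψ) (ofCharBil_bal ψ) x)
    (fun x y => by
      show RT.lift (ofCharBil ψ) (ofCharBil_bal ψ) (x + y) = _ + _
      rw [map_add])

@[simp] lemma ofChar_mk (ψ : I →ₗ[A] CharacterModule E) (e : E) (m : I) :
    ofChar ψ (RT.mk A e m) = ψ m e := by
  show RT.lift (ofCharBil ψ) (ofCharBil_bal ψ) (RT.mk A e m) = ψ m e
  rw [RT.lift_mk]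
  rfl

/-- restriction of characters along a map of right modules, as an `A`-linear map. -/
noncomputable def charRes (g : E →ₗ[Aᵐᵒᵖ] E') : CharacterModule E' →ₗ[A] CharacterModule E where
  toFun χ := χ.comp g.toAddMonoidHom
  map_add' χ ψ := rfl
  map_smul' a χ := by
    ext e
    show χ (op a • g e) = χ (g (op a • e))
    rw [LinearMap.map_smul g]

@[simp] lemma charRes_apply (g : E →ₗ[Aᵐᵒᵖ] E') (χ : CharacterModule E') (e : E) :
    charRes g χ e = χ (g e) := rfl

lemma charRes_surjective {g : E →ₗ[Aᵐᵒᵖ] E'} (hg : Function.Injective g) :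
    Function.Surjective (charRes (A := A) g) := by
  have hsurj := CharacterModule.dual_surjective_of_injective (R := ℤ)
    g.toAddMonoidHom.toIntLinearMap hg
  intro χ
  obtain ⟨χ', hχ'⟩ := hsurj χ
  exact ⟨χ', by ext e; exact congrFun (congrArg DFunLike.coe hχ') e⟩

/-- the kernel of restriction is the character module of the cokernel. -/
noncomputable def kerCharEquiv (g : E →ₗ[Aᵐᵒᵖ] E') :
    CharacterModule (E' ⧸ LinearMap.range g) ≃ₗ[A] ↥(LinearMap.ker (charRes (A := A) g)) := by
  refine LinearEquiv.ofBijective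
    (LinearMap.codRestrict _ (charRes (LinearMap.range g).mkQ) (fun χ => by
      rw [LinearMap.mem_ker]
      ext e
      show χ ((LinearMap.range g).mkQ (g e)) = 0
      rw [Submodule.mkQ_apply, (Submodule.Quotient.mk_eq_zero (LinearMap.range g)).mpr (LinearMap.mem_range_self g e), map_zero]))
    ⟨?_, ?_⟩
  · intro χ χ' hχ
    ext x
    obtain ⟨e', rfl⟩ := Submodule.mkQ_surjective (LinearMap.range g) x
    exact congrFun (congrArg DFunLike.coe (congrArg Subtype.val hχ)) e'
  · rintro ⟨χ', hχ'⟩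
    rw [LinearMap.mem_ker] at hχ'
    have hzero : ∀ e' ∈ (LinearMap.range g).toAddSubgroup, χ' e' = 0 := by
      rintro e' ⟨e, rfl⟩
      exact congrFun (congrArg DFunLike.coe hχ') e
    refine ⟨QuotientAddGroup.lift _ χ' hzero, ?_⟩
    apply Subtype.ext
    ext e'
    rfl

end Char


section Ext1

open CategoryTheory Limits

variable {A : Type u} [Ring A]

lemma ext1_vanish (F Y : ModuleCat.{u} A)
    (H : ∀ (X : ModuleCat.{u} A) (p : X ⟶ F), Function.Surjective p →
      ∀ φ : (LinearMap.ker (p.hom : X →ₗ[A] F)) →ₗ[A] Y,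
        ∃ ψ : X →ₗ[A] Y, ∀ x (hx : x ∈ LinearMap.ker (p.hom : X →ₗ[A] F)), ψ x = φ ⟨x, hx⟩) :
    ExtVanish A 1 F Y := by
  obtain ⟨P⟩ := (inferInstance : HasProjectiveResolution F).out
  suffices hsub : Subsingleton ((P.complex.linearYonedaObj ℤ Y).homology 1) by
    refine ⟨fun a b => ?_⟩
    have e := P.isoExt (R := ℤ) 1 Y
    calc a = e.inv (e.hom a) := (e.hom_inv_id_apply a).symm
      _ = e.inv (e.hom b) := by rw [Subsingleton.elim (e.hom a) (e.hom b)]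
      _ = b := e.hom_inv_id_apply b
  have hexact : (P.complex.linearYonedaObj ℤ Y).ExactAt 1 := by
    rw [HomologicalComplex.exactAt_iff' _ 0 1 2 (by simp) (by simp)]
    rw [ShortComplex.moduleCat_exact_iff]
    intro f hf
    let fm : P.complex.X 1 ⟶ Y := f
    have hf' : P.complex.d 2 1 ≫ fm = 0 := by
      exact hf
    let d10 : P.complex.X 1 ⟶ P.complex.X 0 := P.complex.d 1 0
    let e0 := HomologicalComplex.singleObjXSelf (ComplexShape.down ℕ) 0 F
    let p : P.complex.X 0 ⟶ F := P.π.f 0 ≫ e0.hom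
    have hp : Function.Surjective p := by
      rw [← ModuleCat.epi_iff_surjective]
      exact epi_comp _ _
    have he0 : Function.Injective e0.hom := by
      rw [← ModuleCat.mono_iff_injective]
      infer_instance
    have hker : LinearMap.range (d10.hom : _ →ₗ[A] _) = LinearMap.ker (p.hom : _ →ₗ[A] _) := by
      rw [P.exact₀.moduleCat_range_eq_ker]
      ext x
      simp only [LinearMap.mem_ker]
      constructor
      · intro hx
        show e0.hom ((P.π.f 0) x) = 0
        rw [hx, map_zero]
      · intro hx
        apply he0
        rw [map_zero]
        exact hx
    have hker2 : LinearMap.range (P.complex.d 2 1).hom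
        = LinearMap.ker (d10.hom : _ →ₗ[A] _) := (P.exact_succ 0).moduleCat_range_eq_ker
    have hfker : LinearMap.ker (d10.hom : _ →ₗ[A] _) ≤ LinearMap.ker (fm.hom : _ →ₗ[A] _) := by
      intro x hx
      rw [← hker2] at hx
      obtain ⟨y, rfl⟩ := hx
      show (P.complex.d 2 1 ≫ fm) y = 0
      rw [hf']
      rfl
    let fbar := Submodule.liftQ _ (fm.hom : _ →ₗ[A] _) hfker
    let eq1 := LinearMap.quotKerEquivRange (d10.hom : _ →ₗ[A] _)
    let eqr := LinearEquiv.ofEq _ _ hker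
    let φ : (LinearMap.ker (p.hom : _ →ₗ[A] _)) →ₗ[A] Y :=
      fbar ∘ₗ (eq1.symm.toLinearMap ∘ₗ eqr.symm.toLinearMap)
    obtain ⟨ψ, hψ⟩ := H (P.complex.X 0) p hp φ
    refine ⟨ModuleCat.ofHom ψ, ?_⟩
    show (ModuleCat.ofHom (Linear.leftComp ℤ Y (P.complex.d 1 0))).hom (ModuleCat.ofHom ψ) = f
    apply ModuleCat.hom_ext
    apply LinearMap.ext
    intro x
    show ψ (d10 x) = fm x
    have hmem : d10 x ∈ LinearMap.ker (p.hom : _ →ₗ[A] _) := by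
      rw [← hker]
      exact ⟨x, rfl⟩
    rw [hψ (d10 x) hmem]
    obtain ⟨t, ht⟩ := Submodule.Quotient.mk_surjective (LinearMap.ker (d10.hom : _ →ₗ[A] _))
      (eq1.symm (eqr.symm ⟨d10 x, hmem⟩))
    have h1 : (eq1 (Submodule.Quotient.mk t) : (P.complex.X 0 : Type u)) = d10 t :=
      LinearMap.quotKerEquivRange_apply_mk _ t
    have h2 : eq1 (Submodule.Quotient.mk t) = eqr.symm ⟨d10 x, hmem⟩ := by
      rw [ht, LinearEquiv.apply_symm_apply]
    have h3 : ((eqr.symm ⟨d10 x, hmem⟩ : LinearMap.range (d10.hom : _ →ₗ[A] _))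
        : (P.complex.X 0 : Type u)) = d10 x := rfl
    have hval : d10 t = d10 x := by rw [← h1, h2, h3]
    have hft : fm t = fm x := by
      have hmem2 : x - t ∈ LinearMap.ker (fm.hom : _ →ₗ[A] _) := by
        apply hfker
        rw [LinearMap.mem_ker, map_sub, hval, sub_self]
      rw [LinearMap.mem_ker, map_sub, sub_eq_zero] at hmem2
      exact hmem2.symm
    show φ ⟨d10 x, hmem⟩ = fm x
    have : φ ⟨d10 x, hmem⟩ = fbar (eq1.symm (eqr.symm ⟨d10 x, hmem⟩)) := rfl
    rw [this, ← ht]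
    show fm t = fm x
    exact hft
  have := (HomologicalComplex.exactAt_iff_isZero_homology _ _).mp hexact
  exact ModuleCat.subsingleton_of_isZero this

end Ext1


section Cotorsion

open CategoryTheory MulOpposite

variable {A : Type u} [Ring A]

lemma cotorsion_congr {Y Y' : ModuleCat.{u} A} (e : ↑Y ≃ₗ[A] ↑Y') (h : Cotorsion A Y) :
    Cotorsion A Y' := by
  intro F hF
  have hv : Subsingleton (extAb A 1 F Y) := h F hF
  have i : extAb A 1 F Y ≅ extAb A 1 F Y' :=
    ((Ext ℤ (ModuleCat.{u} A) 1).obj (Opposite.op F)).mapIso e.toModuleIso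
  refine ⟨fun a b => ?_⟩
  calc a = i.hom (i.inv a) := (i.inv_hom_id_apply a).symm
    _ = i.hom (i.inv b) := by rw [Subsingleton.elim (i.inv a) (i.inv b)]
    _ = b := i.inv_hom_id_apply b

lemma cotorsion_of_injective (Iₘ : ModuleCat.{u} A) (hI : Module.Injective A Iₘ) :
    Cotorsion A Iₘ := by
  intro F _
  apply ext1_vanish
  intro X p hp φ
  obtain ⟨ψ, hψ⟩ := hI.out (LinearMap.ker (p.hom : X →ₗ[A] F)).subtype
    (Submodule.injective_subtype _) φ
  exact ⟨ψ, fun x hx => hψ ⟨x, hx⟩⟩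

lemma cotorsion_char (M : Type u) [AddCommGroup M] [Module Aᵐᵒᵖ M] :
    Cotorsion A (ModuleCat.of A (CharacterModule M)) := by
  intro F hF
  apply ext1_vanish
  intro X p hp φ
  have hinj := RT.pure_ker (A := A) hF (p.hom : X →ₗ[A] F) hp M
  obtain ⟨χ₂, hχ₂⟩ := CharacterModule.dual_surjective_of_injective (R := ℤ)
    (RTensor.map A M (LinearMap.ker (p.hom : X →ₗ[A] F)).subtype) hinj (ofChar φ)
  refine ⟨toChar χ₂, ?_⟩
  intro x hx
  apply CharacterModule.ext
  intro m
  have h1 : RT.mk A m x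
      = RTensor.map A M (LinearMap.ker (p.hom : X →ₗ[A] F)).subtype (RT.mk A m ⟨x, hx⟩) := by
    rw [RT.map_mk]
    rfl
  have h2 := congrFun (congrArg DFunLike.coe hχ₂) (RT.mk A m (⟨x, hx⟩ : LinearMap.ker (p.hom : X →ₗ[A] F)))
  have h3 : χ₂ (RTensor.map A M (LinearMap.ker (p.hom : X →ₗ[A] F)).subtype
      (RT.mk A m ⟨x, hx⟩)) = ofChar φ (RT.mk A m ⟨x, hx⟩) := h2
  exact ((congrArg χ₂ h1).trans h3).trans (ofChar_mk φ m ⟨x, hx⟩)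

end Cotorsion

section GI

open CategoryTheory MulOpposite

variable {A : Type u} [Ring A]

lemma gi_congr {G G' : ModuleCat.{u} A} (e : ↑G ≃ₗ[A] ↑G') (h : GorensteinInjective A G) :
    GorensteinInjective A G' := by
  obtain ⟨C, h1, h2, h3, ⟨e'⟩⟩ := h
  exact ⟨C, h1, h2, h3, ⟨e.symm.trans e'⟩⟩

lemma ModComplex.d_eqToHom (C : ModComplex A) {i j : ℤ} (h : i = j) (h' : i + 1 = j + 1) :
    C.d i ≫ eqToHom (congrArg C.X h) = eqToHom (congrArg C.X h') ≫ C.d j := by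
  subst h
  simp

lemma gi_section {X Iₘ : Type u} [AddCommGroup X] [Module A X] [AddCommGroup Iₘ] [Module A Iₘ]
    (hI : Module.Injective A Iₘ) (p : X →ₗ[A] Iₘ) (hp : Function.Surjective p)
    (hG : GorensteinInjective A (ModuleCat.of A ↥(LinearMap.ker p))) :
    ∃ s : Iₘ →ₗ[A] X, p ∘ₗ s = LinearMap.id := by
  obtain ⟨C, hinj, hacyc, hlift, ⟨e⟩⟩ := hG
  obtain ⟨u, hu⟩ := (hinj (-1 + 1)).out (LinearMap.ker p).subtype (Submodule.injective_subtype _)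
      ((LinearMap.ker (C.d (-1)).hom).subtype ∘ₗ e.toLinearMap)
  let w : X →ₗ[A] (C.X (-1) : Type u) := (C.d (-1)).hom ∘ₗ u
  have hw : ∀ k : LinearMap.ker p, w k = 0 := by
    intro k
    show (C.d (-1)).hom (u ((LinearMap.ker p).subtype k)) = 0
    rw [hu k]
    exact (e k).2
  have hwker : LinearMap.ker p ≤ LinearMap.ker w := fun x hx => hw ⟨x, hx⟩
  let wbar := Submodule.liftQ _ w hwker
  let q := LinearMap.quotKerEquivOfSurjective p hp
  let v : Iₘ →ₗ[A] (C.X (-1) : Type u) := wbar ∘ₗ q.symm.toLinearMap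
  have hqmk : ∀ x : X, q (Submodule.Quotient.mk x) = p x := fun _ => rfl
  have hv : ∀ x : X, v (p x) = w x := by
    intro x
    show wbar (q.symm (p x)) = w x
    have hs : q.symm (p x) = Submodule.Quotient.mk x := by
      apply q.injective
      rw [LinearEquiv.apply_symm_apply, hqmk]
    rw [hs]
    rfl
  -- totally-acyclic lifting at degree -2
  have h12 : (-1 : ℤ) = -2 + 1 := by norm_num
  have h112 : (-1 : ℤ) + 1 = -2 + 1 + 1 := by norm_num
  let vHom : ModuleCat.of A Iₘ ⟶ C.X (-1) := ModuleCat.ofHom v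
  let f : ModuleCat.of A Iₘ ⟶ C.X (-2 + 1) := vHom ≫ eqToHom (congrArg C.X h12)
  have hf0 : f ≫ C.d (-2) = 0 := by
    have hcomp : C.d (-1) ≫ (eqToHom (congrArg C.X h12) ≫ C.d (-2)) = 0 := by
      rw [← Category.assoc, C.d_eqToHom h12 h112, Category.assoc, C.dd (-2), Limits.comp_zero]
    apply ModuleCat.hom_ext
    apply LinearMap.ext
    intro i
    obtain ⟨x, rfl⟩ := hp i
    show (eqToHom (congrArg C.X h12) ≫ C.d (-2) : C.X (-1) ⟶ C.X (-2)) (v (p x)) = 0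
    rw [hv x]
    show (C.d (-1) ≫ (eqToHom (congrArg C.X h12) ≫ C.d (-2)) : C.X (-1+1) ⟶ C.X (-2)) (u x) = 0
    rw [hcomp]
    rfl
  obtain ⟨g, hg⟩ := hlift (ModuleCat.of A Iₘ) hI (-2) f hf0
  let g' : ModuleCat.of A Iₘ ⟶ C.X (-1 + 1) := g ≫ eqToHom (congrArg C.X h112.symm)
  have hg' : g' ≫ C.d (-1) = vHom := by
    have hd := C.d_eqToHom h12.symm h112.symm
    calc g' ≫ C.d (-1) = g ≫ (eqToHom (congrArg C.X h112.symm) ≫ C.d (-1)) := by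
          rw [Category.assoc]
      _ = g ≫ (C.d (-2+1) ≫ eqToHom (congrArg C.X h12.symm)) := by rw [hd]
      _ = (g ≫ C.d (-2+1)) ≫ eqToHom (congrArg C.X h12.symm) := by rw [Category.assoc]
      _ = f ≫ eqToHom (congrArg C.X h12.symm) := by rw [hg]
      _ = vHom ≫ (eqToHom (congrArg C.X h12) ≫ eqToHom (congrArg C.X h12.symm)) := by
          rw [Category.assoc]
      _ = vHom := by rw [eqToHom_trans, eqToHom_refl, Category.comp_id]
  let u' : X →ₗ[A] (C.X (-1+1) : Type u) := u - (g'.hom ∘ₗ p)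
  have hrange : ∀ x : X, u' x ∈ LinearMap.ker (C.d (-1)).hom := by
    intro x
    rw [LinearMap.mem_ker]
    have h1 : u' x = u x - g'.hom (p x) := rfl
    rw [h1, map_sub]
    have h2 : (C.d (-1)).hom (g'.hom (p x)) = v (p x) :=
      congrArg (fun φ => φ.hom (p x)) hg'
    rw [h2, hv x]
    show (C.d (-1)).hom (u x) - w x = 0
    rw [sub_eq_zero]
    rfl
  let r : X →ₗ[A] ↥(LinearMap.ker p) :=
    e.symm.toLinearMap ∘ₗ LinearMap.codRestrict _ u' hrange
  have hr : ∀ k : ↥(LinearMap.ker p), r (k : X) = k := by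
    intro k
    have h1 : u' (k : X) = u ((LinearMap.ker p).subtype k) := by
      show u (k : X) - g'.hom (p (k : X)) = u (k : X)
      rw [LinearMap.mem_ker.mp k.2, map_zero, sub_zero]
    have h2 : LinearMap.codRestrict _ u' hrange (k : X) = e k := by
      apply Subtype.ext
      show u' (k : X) = ((e k : _) : (C.X (-1+1) : Type u))
      rw [h1, hu k]
      rfl
    show e.symm (LinearMap.codRestrict _ u' hrange (k : X)) = k
    rw [h2, LinearEquiv.symm_apply_apply]
  let t : X →ₗ[A] X := LinearMap.id - (LinearMap.ker p).subtype ∘ₗ r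
  have htk : LinearMap.ker p ≤ LinearMap.ker t := by
    intro x hx
    rw [LinearMap.mem_ker]
    show x - Subtype.val (r x) = 0
    have h := congrArg Subtype.val (hr ⟨x, hx⟩)
    show x - Subtype.val (r x) = 0
    rw [show Subtype.val (r x) = x from h, sub_self]
  let tbar := Submodule.liftQ _ t htk
  refine ⟨tbar ∘ₗ q.symm.toLinearMap, ?_⟩
  apply LinearMap.ext
  intro i
  obtain ⟨x, rfl⟩ := hp i
  have hs : q.symm (p x) = Submodule.Quotient.mk x := by
    apply q.injective
    rw [LinearEquiv.apply_symm_apply, hqmk]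
  show p (tbar (q.symm (p x))) = p x
  rw [hs]
  show p (x - Subtype.val (r x)) = p x
  rw [map_sub, LinearMap.mem_ker.mp (r x).2, sub_zero]

lemma gi_lift {Yt Zt Iₘ : Type u} [AddCommGroup Yt] [Module A Yt] [AddCommGroup Zt] [Module A Zt]
    [AddCommGroup Iₘ] [Module A Iₘ]
    (hI : Module.Injective A Iₘ) (p : Yt →ₗ[A] Zt) (hp : Function.Surjective p)
    (hG : GorensteinInjective A (ModuleCat.of A ↥(LinearMap.ker p)))
    (φ : Iₘ →ₗ[A] Zt) : ∃ ψ : Iₘ →ₗ[A] Yt, p ∘ₗ ψ = φ := by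
  let Xp := LinearMap.ker ((p ∘ₗ LinearMap.fst A Yt Iₘ) - (φ ∘ₗ LinearMap.snd A Yt Iₘ))
  let q : ↥Xp →ₗ[A] Iₘ := LinearMap.snd A Yt Iₘ ∘ₗ Xp.subtype
  have hq : Function.Surjective q := by
    intro i
    obtain ⟨y, hy⟩ := hp (φ i)
    refine ⟨⟨(y, i), ?_⟩, rfl⟩
    show p y - φ i = 0
    rw [hy, sub_self]
  have hmemXp : ∀ z : ↥Xp, p (z : Yt × Iₘ).1 = φ (z : Yt × Iₘ).2 := by
    intro z
    have := z.2
    have h2 : p (z : Yt × Iₘ).1 - φ (z : Yt × Iₘ).2 = 0 := this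
    rw [sub_eq_zero] at h2
    exact h2
  let eker : ↥(LinearMap.ker q) ≃ₗ[A] ↥(LinearMap.ker p) :=
    { toFun := fun k => ⟨((k : ↥Xp) : Yt × Iₘ).1, by
        rw [LinearMap.mem_ker, hmemXp (k : ↥Xp)]
        have h2 : ((k : ↥Xp) : Yt × Iₘ).2 = 0 := k.2
        rw [h2, map_zero]⟩
      map_add' := fun _ _ => rfl
      map_smul' := fun _ _ => rfl
      invFun := fun y => ⟨⟨((y : Yt), 0), by
        show p (y : Yt) - φ 0 = 0
        rw [map_zero, LinearMap.mem_ker.mp y.2, sub_zero]⟩, by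
        show ((0 : Iₘ)) = 0
        rfl⟩
      left_inv := by
        intro k
        apply Subtype.ext
        apply Subtype.ext
        have h2 : ((k : ↥Xp) : Yt × Iₘ).2 = 0 := k.2
        exact Prod.ext rfl h2.symm
      right_inv := fun y => rfl }
  obtain ⟨s, hs⟩ := gi_section hI q hq (gi_congr eker.symm hG)
  refine ⟨LinearMap.fst A Yt Iₘ ∘ₗ Xp.subtype ∘ₗ s, ?_⟩
  apply LinearMap.ext
  intro i
  show p ((s i : Yt × Iₘ).1) = φ i
  rw [hmemXp (s i)]
  have h2 : ((s i : ↥Xp) : Yt × Iₘ).2 = i := LinearMap.congr_fun hs i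
  rw [h2]

end GI


/-- if every cotorsion module is Gorenstein injective, then every
injective module is flat-cotorsion. -/
theorem stmt7 (A : Type u) [Ring A]
    (h : ∀ M : ModuleCat.{u} A, Cotorsion A M → GorensteinInjective A M) :
    ∀ I : ModuleCat.{u} A, Module.Injective A I → FlatCotorsion A I := by
  intro I hI
  constructor
  · -- flat
    intro E E' _ _ _ _ g hg
    suffices hker : ∀ x : RTensor A E ↑I, RTensor.mapRight A (↑I) g x = 0 → x = 0 by
      intro x y hxy
      rw [← sub_eq_zero]
      exact hker _ (by rw [map_sub, hxy, sub_self])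
    intro x hx
    by_contra hne
    obtain ⟨χ, hχ⟩ := CharacterModule.exists_character_apply_ne_zero_of_ne_zero hne
    have hpres : Function.Surjective (charRes (A := A) g) := charRes_surjective hg
    have hcot : Cotorsion A (ModuleCat.of A ↥(LinearMap.ker (charRes (A := A) g))) :=
      cotorsion_congr (kerCharEquiv g) (cotorsion_char (E' ⧸ LinearMap.range g))
    have hGI := h _ hcot
    obtain ⟨ψ, hψ⟩ := gi_lift hI (charRes (A := A) g) hpres hGI (toChar χ)
    have hfac : ∀ t : RTensor A E ↑I, ofChar ψ (RTensor.mapRight A (↑I) g t) = χ t := by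
      intro t
      induction t using RT.induction_on with
      | zero => simp
      | hmk e m =>
          rw [RT.mapRight_mk, ofChar_mk]
          have h2 : charRes (A := A) g (ψ m) = toChar χ m := LinearMap.congr_fun hψ m
          have h3 := congrFun (congrArg DFunLike.coe h2) e
          rw [charRes_apply] at h3
          rw [h3, toChar_apply]
      | hadd a b ha hb => rw [map_add, map_add, ha, hb, map_add]
    exact hχ (by rw [← hfac x, hx, map_zero])
  · exact cotorsion_of_injective I hI
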